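/- If s = σ + it satisfies σ > 1 and ζ'(s) = 0, then σ ≤ E, where E > 1 is the unique real solution of (2^{σ+1}/(4^σ - 1)) log 2 = -ζ'(σ)/ζ(σ). -/

import Mathlib

open Complex

namespace ZetaDerivZeroAux

open ArithmeticFunction LSeries.notation

/-- powers of two that are at least 2 -/
def P : Set ℕ := Set.range (fun k : ℕ => 2 ^ (k + 1))

lemma three_le_of_not_mem_P {n : ℕ} (hn : n ∉ P) (h : Λ n ≠ 0) : 3 ≤ n := by
  have h2 : 2 ≤ n := (ArithmeticFunction.vonMangoldt_ne_zero_iff.mp h).two_le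
  rcases eq_or_lt_of_le h2 with h | h
  · exact absurd ⟨0, by simp [← h]⟩ hn
  · omega

lemma norm_term (s : ℂ) (n : ℕ) :
    ‖LSeries.term ↗Λ s n‖ = Λ n / (n : ℝ) ^ s.re := by
  rw [LSeries.norm_term_eq]
  rcases eq_or_ne n 0 with rfl | hn
  · simp
  · rw [if_neg hn, Complex.norm_real, Real.norm_eq_abs,
      _root_.abs_of_nonneg ArithmeticFunction.vonMangoldt_nonneg]

lemma term_ofReal (x : ℝ) (n : ℕ) :
    LSeries.term ↗Λ (x : ℂ) n = ((Λ n / (n : ℝ) ^ x : ℝ) : ℂ) := by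
  rcases eq_or_ne n 0 with rfl | hn
  · simp
  · rw [LSeries.term_of_ne_zero hn, Complex.ofReal_div,
      Complex.ofReal_cpow n.cast_nonneg x]
    push_cast
    rfl

lemma summable_f {x : ℝ} (hx : 1 < x) :
    Summable (fun n : ℕ => Λ n / (n : ℝ) ^ x) := by
  have h := ArithmeticFunction.LSeriesSummable_vonMangoldt (s := (x : ℂ)) (by simpa using hx)
  exact Complex.summable_ofReal.mp (h.congr fun n => term_ofReal x n)

lemma norm_two_cpow (s : ℂ) : ‖(2 : ℂ) ^ s‖ = (2 : ℝ) ^ s.re := by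
  rw [show (2 : ℂ) = ((2 : ℝ) : ℂ) by norm_num, Complex.norm_cpow_eq_rpow_re_of_pos two_pos]

lemma two_lt_two_rpow {x : ℝ} (hx : 1 < x) : (2 : ℝ) < (2 : ℝ) ^ x := by
  calc (2:ℝ) = (2:ℝ) ^ (1:ℝ) := (Real.rpow_one 2).symm
  _ < (2:ℝ) ^ x := Real.rpow_lt_rpow_of_exponent_lt one_lt_two hx

lemma split {s : ℂ} (hs : 1 < s.re) :
    LSeries ↗Λ s = (Real.log 2 : ℂ) / ((2 : ℂ) ^ s - 1)
      + ∑' n : ↥Pᶜ, LSeries.term ↗Λ s n := by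
  have hsum : Summable (LSeries.term ↗Λ s) := LSeriesSummable_vonMangoldt hs
  have key := Summable.tsum_add_tsum_compl (f := LSeries.term ↗Λ s) (s := P)
    (hsum.subtype P) (hsum.subtype Pᶜ)
  have hinj : Function.Injective (fun k : ℕ => 2 ^ (k + 1)) := by
    intro a b h
    have := Nat.pow_right_injective le_rfl (h : 2 ^ (a+1) = 2 ^ (b+1))
    omega
  have hw1 : (1 : ℝ) < ‖(2 : ℂ) ^ s‖ := by
    rw [norm_two_cpow]
    exact one_lt_two.trans (two_lt_two_rpow hs)
  have hw0 : (2 : ℂ) ^ s ≠ 0 := by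
    intro h; rw [h] at hw1; simp at hw1; norm_num at hw1
  have hw1' : (2 : ℂ) ^ s ≠ 1 := by
    intro h; rw [h] at hw1; simp at hw1
  have hwinv : ‖((2 : ℂ) ^ s)⁻¹‖ < 1 := by
    rw [norm_inv]
    exact inv_lt_one_of_one_lt₀ hw1
  have hterm : ∀ k : ℕ, LSeries.term ↗Λ s (2 ^ (k + 1))
      = (Real.log 2 : ℂ) * (((2 : ℂ) ^ s)⁻¹) ^ (k + 1) := by
    intro k
    rw [LSeries.term_of_ne_zero (by positivity)]
    rw [ArithmeticFunction.vonMangoldt_apply_pow (Nat.succ_ne_zero k),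
      ArithmeticFunction.vonMangoldt_apply_prime Nat.prime_two]
    rw [Nat.cast_pow, show ((2:ℕ):ℂ) = 2 from by norm_num,
      show ((2:ℂ) ^ (k+1)) ^ s = ((2:ℂ) ^ s) ^ (k+1) from by
        rw [← Complex.cpow_nat_mul]
        rw [show ((2:ℂ):ℂ) = (((2:ℕ) : ℂ)) from by norm_num,
          Complex.natCast_cpow_natCast_mul],
      div_eq_mul_inv, inv_pow]
    norm_num
  have hP : ∑' n : ↥P, LSeries.term ↗Λ s n
      = (Real.log 2 : ℂ) / ((2 : ℂ) ^ s - 1) := by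
    rw [show (∑' n : ↥P, LSeries.term ↗Λ s n)
        = ∑' k : ℕ, LSeries.term ↗Λ s (2 ^ (k + 1)) from tsum_range _ hinj]
    simp_rw [hterm, pow_succ, mul_comm (((2:ℂ)^s)⁻¹ ^ _), ← mul_assoc]
    rw [tsum_mul_left, tsum_geometric_of_norm_lt_one hwinv]
    have hne : (2:ℂ)^s - 1 ≠ 0 := sub_ne_zero.mpr hw1'
    have hne2 : (1:ℂ) - ((2:ℂ)^s)⁻¹ ≠ 0 := by
      intro h
      apply hne
      have : ((2:ℂ)^s) * (1 - ((2:ℂ)^s)⁻¹) = 0 := by rw [h, mul_zero]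
      rw [mul_sub, mul_one, mul_inv_cancel₀ hw0] at this
      linear_combination this
    field_simp
  rw [show L ↗Λ s = ∑' n, LSeries.term ↗Λ s n from rfl, ← key, hP]

/-- the tail series over non-powers-of-two, at a real point -/
noncomputable def T (x : ℝ) : ℝ := ∑' n : ↥Pᶜ, (Λ (n : ℕ) / ((n : ℕ) : ℝ) ^ x)

lemma real_split {x : ℝ} (hx : 1 < x) :
    -(deriv riemannZeta x / riemannZeta x)
      = ((Real.log 2 / ((2:ℝ) ^ x - 1) + T x : ℝ) : ℂ) := by
  have hx' : 1 < (x : ℂ).re := by simpa using hx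
  have h := split hx'
  rw [LSeries_vonMangoldt_eq_deriv_riemannZeta_div hx'] at h
  have htail : (∑' n : ↥Pᶜ, LSeries.term ↗Λ (x : ℂ) n) = ((T x : ℝ) : ℂ) := by
    rw [T, Complex.ofReal_tsum]
    exact tsum_congr fun n => term_ofReal x (n : ℕ)
  have hbase : ((2:ℂ) ^ (x:ℂ) : ℂ) = (((2:ℝ) ^ x : ℝ) : ℂ) := by
    rw [Complex.ofReal_cpow two_pos.le x]
    norm_num
  rw [htail, hbase] at h
  rw [← neg_div, h]
  push_cast
  ring

lemma T_lower {s : ℂ} (hs : 1 < s.re) (hz : deriv riemannZeta s = 0) :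
    Real.log 2 / ((2:ℝ) ^ s.re + 1) ≤ T s.re := by
  have hlog : 0 < Real.log 2 := Real.log_pos one_lt_two
  have hb2 : 2 < (2:ℝ) ^ s.re := two_lt_two_rpow hs
  have hs0 : LSeries ↗Λ s = 0 := by
    rw [LSeries_vonMangoldt_eq_deriv_riemannZeta_div hs, hz]
    simp
  have h := split hs
  rw [hs0] at h
  have heq : (Real.log 2 : ℂ) / ((2 : ℂ) ^ s - 1)
      = -∑' n : ↥Pᶜ, LSeries.term ↗Λ s n := by linear_combination -h
  have hw1 : (1 : ℝ) < ‖(2 : ℂ) ^ s‖ := by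
    rw [norm_two_cpow]; exact one_lt_two.trans hb2
  have hw1' : (2 : ℂ) ^ s ≠ 1 := by
    intro hh; rw [hh] at hw1; simp at hw1
  have hd0 : 0 < ‖(2:ℂ) ^ s - 1‖ := by
    rw [norm_pos_iff]; exact sub_ne_zero.mpr hw1'
  have hdle : ‖(2:ℂ) ^ s - 1‖ ≤ (2:ℝ) ^ s.re + 1 := by
    calc ‖(2:ℂ) ^ s - 1‖ ≤ ‖(2:ℂ) ^ s‖ + ‖(1:ℂ)‖ := norm_sub_le _ _
    _ = (2:ℝ) ^ s.re + 1 := by rw [norm_two_cpow, norm_one]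
  have hnormsum : Summable (fun n : ℕ => ‖LSeries.term ↗Λ s n‖) :=
    (summable_f hs).congr fun n => (norm_term s n).symm
  have htail_le : ‖∑' n : ↥Pᶜ, LSeries.term ↗Λ s n‖ ≤ T s.re := by
    calc ‖∑' n : ↥Pᶜ, LSeries.term ↗Λ s n‖
        ≤ ∑' n : ↥Pᶜ, ‖LSeries.term ↗Λ s (n : ℕ)‖ :=
          norm_tsum_le_tsum_norm (hnormsum.subtype Pᶜ)
      _ = T s.re := tsum_congr fun n => norm_term s (n : ℕ)
  have hnorm_eq : ‖(Real.log 2 : ℂ) / ((2 : ℂ) ^ s - 1)‖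
      = Real.log 2 / ‖(2:ℂ) ^ s - 1‖ := by
    rw [norm_div, Complex.norm_real, Real.norm_eq_abs, _root_.abs_of_nonneg hlog.le]
  calc Real.log 2 / ((2:ℝ) ^ s.re + 1) ≤ Real.log 2 / ‖(2:ℂ) ^ s - 1‖ :=
        div_le_div_of_nonneg_left hlog.le hd0 hdle
    _ = ‖(Real.log 2 : ℂ) / ((2 : ℂ) ^ s - 1)‖ := hnorm_eq.symm
    _ = ‖∑' n : ↥Pᶜ, LSeries.term ↗Λ s n‖ := by rw [heq, norm_neg]
    _ ≤ T s.re := htail_le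

lemma T_mono {x y : ℝ} (hx : 1 < x) (hxy : x ≤ y) :
    (2:ℝ) ^ y * T y ≤ (2:ℝ) ^ x * T x := by
  have hy : 1 < y := lt_of_lt_of_le hx hxy
  rw [T, T, ← tsum_mul_left, ← tsum_mul_left]
  refine Summable.tsum_le_tsum (fun n => ?_)
    (((summable_f hy).subtype Pᶜ).mul_left _)
    (((summable_f hx).subtype Pᶜ).mul_left _)
  rcases eq_or_ne (Λ (n : ℕ)) 0 with h0 | h0
  · simp [h0]
  · have h3 : 3 ≤ (n : ℕ) := three_le_of_not_mem_P n.2 h0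
    have hn0 : (0:ℝ) < ((n : ℕ) : ℝ) := by positivity
    have h1 : (2:ℝ) ^ y / ((n:ℕ):ℝ) ^ y ≤ (2:ℝ) ^ x / ((n:ℕ):ℝ) ^ x := by
      rw [← Real.div_rpow two_pos.le hn0.le, ← Real.div_rpow two_pos.le hn0.le]
      refine Real.rpow_le_rpow_of_exponent_ge (by positivity) ?_ hxy
      rw [div_le_one hn0]
      exact_mod_cast le_trans (by norm_num) h3
    calc (2:ℝ)^y * (Λ (n:ℕ) / ((n:ℕ):ℝ) ^ y)
        = Λ (n:ℕ) * ((2:ℝ)^y / ((n:ℕ):ℝ) ^ y) := by ring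
      _ ≤ Λ (n:ℕ) * ((2:ℝ)^x / ((n:ℕ):ℝ) ^ x) :=
          mul_le_mul_of_nonneg_left h1 ArithmeticFunction.vonMangoldt_nonneg
      _ = (2:ℝ)^x * (Λ (n:ℕ) / ((n:ℕ):ℝ) ^ x) := by ring

end ZetaDerivZeroAux

open ZetaDerivZeroAux

theorem zeta_deriv_zero_re_le (E : ℝ) (hE : 1 < E)
    (hEeq : ((((2 : ℝ) ^ (E + 1) / ((4 : ℝ) ^ E - 1)) * Real.log 2 : ℝ) : ℂ) =
      -(deriv riemannZeta E / riemannZeta E))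
    (huniq : ∀ σ : ℝ, 1 < σ →
      ((((2 : ℝ) ^ (σ + 1) / ((4 : ℝ) ^ σ - 1)) * Real.log 2 : ℝ) : ℂ) =
        -(deriv riemannZeta σ / riemannZeta σ) → σ = E)
    (s : ℂ) (hs : 1 < s.re) (hz : deriv riemannZeta s = 0) : s.re ≤ E := by
  by_contra hcon
  push_neg at hcon
  have hre : 1 < s.re := hs
  set a := (2:ℝ) ^ E with ha
  set b := (2:ℝ) ^ s.re with hb
  have ha2 : 2 < a := two_lt_two_rpow hE
  have hb2 : 2 < b := two_lt_two_rpow hre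
  have hab : a < b := Real.rpow_lt_rpow_of_exponent_lt one_lt_two hcon
  have hlog : 0 < Real.log 2 := Real.log_pos one_lt_two
  -- Step 1: value of T E
  have hTE : T E = Real.log 2 / (a + 1) := by
    have h1 := (hEeq.trans (real_split hE)).symm
    rw [Complex.ofReal_inj] at h1
    have h4 : (4:ℝ) ^ E = a * a := by
      rw [show (4:ℝ) = 2 * 2 by norm_num, Real.mul_rpow two_pos.le two_pos.le]
    have h2 : (2:ℝ) ^ (E + 1) = a * 2 := by
      rw [Real.rpow_add two_pos, Real.rpow_one]
    rw [h4, h2, ← ha] at h1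
    have hane : a - 1 ≠ 0 := by nlinarith
    have hane' : a + 1 ≠ 0 := by nlinarith
    have hane'' : a * a - 1 ≠ 0 := by nlinarith
    field_simp at h1
    have h6 : (a - 1)^2 * (T E * (a + 1) - Real.log 2) = 0 := by
      rw [eq_div_iff (by nlinarith : (0:ℝ) < a^2 - 1).ne'] at h1
      linear_combination h1
    have h7 : T E * (a + 1) - Real.log 2 = 0 :=
      (mul_eq_zero.mp h6).resolve_left (pow_ne_zero 2 hane)
    rw [eq_div_iff hane']
    linarith [h7]
  have hkey : Real.log 2 / (b + 1) ≤ T s.re := T_lower hs hz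
  have hmono : b * T s.re ≤ a * T E := T_mono hE hcon.le
  rw [hTE] at hmono
  have h5 : b * (Real.log 2 / (b + 1)) ≤ a * (Real.log 2 / (a + 1)) :=
    le_trans (mul_le_mul_of_nonneg_left hkey (by positivity)) hmono
  rw [mul_div_assoc', mul_div_assoc', div_le_div_iff₀ (by positivity) (by positivity)] at h5
  nlinarith [h5, hlog, hab, ha2]
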